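/- Let n ≥ 3 be a natural number and let λ₂, λ₃, r be real numbers with λ₃ < λ₂ and r > λ₂ + n(λ₂ − λ₃). Set a = r − n(λ₂ − λ₃). Then the set { (u₁,u₂,u₃) ∈ ℝ³ : λ₃ ≤ u₂ ≤ λ₂ ≤ u₁, u₂ ≤ u₃ ≤ u₁, u₁ + n·u₂ ≤ r + n·λ₃, u₁ + u₂ = 2u₃ } equals the convex hull in ℝ³ of the four points (λ₂, λ₂, λ₂), (a, λ₂, (a+λ₂)/2), (r, λ₃, (r+λ₃)/2), and (λ₂, λ₃, (λ₂+λ₃)/2). -/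
import Mathlib


/-- the slice `{u₁ + u₂ = 2u₃}` of the Gelfand–Cetlin polytope of
Woodward's multiplicity-free `U(2)`-manifold is the convex hull of four explicit points. -/
theorem stmt_19 (n : ℕ) (hn : 3 ≤ n) (l2 l3 r : ℝ)
    (h32 : l3 < l2) (hr : r > l2 + (n : ℝ) * (l2 - l3)) :
    let a : ℝ := r - (n : ℝ) * (l2 - l3)
    {p : ℝ × ℝ × ℝ | l3 ≤ p.2.1 ∧ p.2.1 ≤ l2 ∧ l2 ≤ p.1 ∧
        p.2.1 ≤ p.2.2 ∧ p.2.2 ≤ p.1 ∧ p.1 + (n : ℝ) * p.2.1 ≤ r + (n : ℝ) * l3 ∧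
        p.1 + p.2.1 = 2 * p.2.2} =
      convexHull ℝ {(l2, l2, l2), (a, l2, (a + l2) / 2),
        (r, l3, (r + l3) / 2), (l2, l3, (l2 + l3) / 2)} := by
  intro a
  have ha : a = r - (n : ℝ) * (l2 - l3) := rfl
  have hn3 : (3:ℝ) ≤ (n:ℝ) := by exact_mod_cast hn
  have hnl : (n:ℝ) * (l2 - l3) = (n:ℝ) * l2 - (n:ℝ) * l3 := by ring
  have hd : (0:ℝ) < l2 - l3 := by linarith
  have hprod : (0:ℝ) < (n:ℝ) * (l2 - l3) := mul_pos (by linarith) hd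
  set S : Set (ℝ × ℝ × ℝ) := {(l2, l2, l2), (a, l2, (a + l2) / 2),
      (r, l3, (r + l3) / 2), (l2, l3, (l2 + l3) / 2)} with hS
  have hA : (l2, l2, l2) ∈ convexHull ℝ S := subset_convexHull ℝ S (by simp [hS])
  have hB : (a, l2, (a + l2) / 2) ∈ convexHull ℝ S := subset_convexHull ℝ S (by simp [hS])
  have hC : (r, l3, (r + l3) / 2) ∈ convexHull ℝ S := subset_convexHull ℝ S (by simp [hS])
  have hD : (l2, l3, (l2 + l3) / 2) ∈ convexHull ℝ S := subset_convexHull ℝ S (by simp [hS])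
  apply Set.Subset.antisymm
  · rintro ⟨x, y, z⟩ ⟨h1, h2, h3, h4, h5, h6, h7⟩
    simp only at h1 h2 h3 h4 h5 h6 h7
    have hdy : (0:ℝ) < r + (n:ℝ)*l3 - (n:ℝ)*y - l2 := by nlinarith
    set s : ℝ := (y - l3) / (l2 - l3) with hs_def
    set θ : ℝ := (x - l2) / (r + (n:ℝ)*l3 - (n:ℝ)*y - l2) with hθ_def
    have hs0 : 0 ≤ s := div_nonneg (by linarith) hd.le
    have hs1 : s ≤ 1 := by rw [hs_def, div_le_one hd]; linarith
    have hθ0 : 0 ≤ θ := div_nonneg (by linarith) hdy.le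
    have hθ1 : θ ≤ 1 := by rw [hθ_def, div_le_one hdy]; linarith
    have hy : y - l3 = s * (l2 - l3) := by
      rw [hs_def]; field_simp
    have hx : x - l2 = θ * (r + (n:ℝ)*l3 - (n:ℝ)*y - l2) := by
      rw [hθ_def]; field_simp
    have hq1 := (convex_convexHull ℝ S) hA hD hs0 (by linarith : (0:ℝ) ≤ 1 - s)
      (by ring)
    have hq2 := (convex_convexHull ℝ S) hB hC hs0 (by linarith : (0:ℝ) ≤ 1 - s)
      (by ring)
    have hp := (convex_convexHull ℝ S) hq1 hq2 (by linarith : (0:ℝ) ≤ 1 - θ) hθ0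
      (by ring)
    have heq : ((x, y, z) : ℝ × ℝ × ℝ) =
        (1 - θ) • (s • (l2, l2, l2) + (1 - s) • (l2, l3, (l2 + l3) / 2)) +
          θ • (s • (a, l2, (a + l2) / 2) + (1 - s) • (r, l3, (r + l3) / 2)) := by
      simp only [Prod.smul_mk, Prod.mk_add_mk, Prod.mk.injEq, smul_eq_mul, ha]
      refine ⟨?_, ?_, ?_⟩
      · linear_combination hx - θ * (n:ℝ) * hy
      · linear_combination hy
      · linear_combination (1/2) * hx + ((1 - θ * (n:ℝ))/2) * hy - (1/2) * h7
    rw [heq]; exact hp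
  · apply convexHull_min
    · rintro p hp
      simp only [hS, Set.mem_insert_iff, Set.mem_singleton_iff] at hp
      rcases hp with rfl | rfl | rfl | rfl <;>
        · simp only [Set.mem_setOf_eq]
          refine ⟨by linarith, by linarith, by linarith, by linarith, by linarith,
            by linarith, by ring⟩
    · rintro ⟨x1, y1, z1⟩ hp ⟨x2, y2, z2⟩ hq c1 c2 hc1 hc2 hc
      obtain ⟨p1, p2, p3, p4, p5, p6, p7⟩ := hp
      obtain ⟨q1, q2, q3, q4, q5, q6, q7⟩ := hq
      simp only at p1 p2 p3 p4 p5 p6 p7 q1 q2 q3 q4 q5 q6 q7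
      simp only [Prod.smul_mk, Prod.mk_add_mk, Set.mem_setOf_eq, smul_eq_mul]
      have e1 : c1 * l3 + c2 * l3 = l3 := by linear_combination l3 * hc
      have e2 : c1 * l2 + c2 * l2 = l2 := by linear_combination l2 * hc
      have e6 : c1 * (r + (n:ℝ) * l3) + c2 * (r + (n:ℝ) * l3) = r + (n:ℝ) * l3 := by
        linear_combination (r + (n:ℝ) * l3) * hc
      refine ⟨?_, ?_, ?_, ?_, ?_, ?_, ?_⟩
      · linarith [mul_le_mul_of_nonneg_left p1 hc1, mul_le_mul_of_nonneg_left q1 hc2]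
      · linarith [mul_le_mul_of_nonneg_left p2 hc1, mul_le_mul_of_nonneg_left q2 hc2]
      · linarith [mul_le_mul_of_nonneg_left p3 hc1, mul_le_mul_of_nonneg_left q3 hc2]
      · linarith [mul_le_mul_of_nonneg_left p4 hc1, mul_le_mul_of_nonneg_left q4 hc2]
      · linarith [mul_le_mul_of_nonneg_left p5 hc1, mul_le_mul_of_nonneg_left q5 hc2]
      · linarith [mul_le_mul_of_nonneg_left p6 hc1, mul_le_mul_of_nonneg_left q6 hc2]
      · linear_combination c1 * p7 + c2 * q7
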